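/- Let M_u, W_u ∈ ℝ^{n_u×n_u} and M_z, W_z ∈ ℝ^{n_z×n_z} be symmetric positive definite, z̃, z_1, …, z_N ∈ ℝ^{n_z}, Z = (z_1 ⋯ z_N), e ∈ ℝ^N the vector of ones, and G = e eᵀ + (Z − z̃eᵀ)ᵀ M_z W_z^{-1} M_z (Z − z̃eᵀ). Suppose {g_i}_{i=1}^N are orthonormal eigenvectors of G with eigenvalues μ_i > 0, and {x_j}_{j=1}^{n_u} satisfy W_u x_j = λ_j M_u x_j with λ_j > 0 and x_jᵀ M_u x_{j'} = δ_{jj'}. Define y_i = Z g_i − (eᵀg_i) z̃, s_i = eᵀg_i − y_iᵀ M_z W_z^{-1} M_z z̃, and ψ_{i,j} = (1/√(μ_i λ_j)) (s_i x_j ; x_j ⊗ W_z^{-1} M_z y_i). Then, with W_θ the block prior precision matrix [[W_u, W_u ⊗ z̃ᵀM_z], [W_u ⊗ M_z z̃, W_u ⊗ (W_z + M_z z̃ z̃ᵀ M_z)]], the vectors ψ_{i,j} are W_θ-orthonormal: ψ_{i,j}ᵀ W_θ ψ_{i',j'} = δ_{ii'} δ_{jj'} for all i, i' ∈ {1,…,N}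 and j, j' ∈ {1,…,n_u}. -/

import Mathlib

open Matrix
open scoped Kronecker

/-- `Wu ⊗ vᵀ` : the Kronecker product of `Wu` with a row vector `vᵀ`
(the trivial row index is suppressed). -/
def kronRow {nu nz : ℕ} (Wu : Matrix (Fin nu) (Fin nu) ℝ) (v : Fin nz → ℝ) :
    Matrix (Fin nu) (Fin nu × Fin nz) ℝ :=
  Matrix.of fun i p => Wu i p.1 * v p.2

/-- `Wu ⊗ v` : the Kronecker product of `Wu` with a column vector `v`
(the trivial column index is suppressed). -/
def kronCol {nu nz : ℕ} (Wu : Matrix (Fin nu) (Fin nu) ℝ) (v : Fin nz → ℝ) :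
    Matrix (Fin nu × Fin nz) (Fin nu) ℝ :=
  Matrix.of fun p i => Wu p.1 i * v p.2

/-- The prior precision matrix
`Wθ = [[Wu, Wu ⊗ z̃ᵀMz], [Wu ⊗ Mz z̃, Wu ⊗ (Wz + Mz z̃ z̃ᵀ Mz)]]`,
acting on `ℝ^{nu} ⊕ ℝ^{nu × nz} ≅ ℝ^{nu(nz+1)}`. -/
noncomputable def Wtheta {nu nz : ℕ} (Wu : Matrix (Fin nu) (Fin nu) ℝ)
    (Wz Mz : Matrix (Fin nz) (Fin nz) ℝ) (zt : Fin nz → ℝ) :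
    Matrix (Fin nu ⊕ Fin nu × Fin nz) (Fin nu ⊕ Fin nu × Fin nz) ℝ :=
  Matrix.fromBlocks Wu (kronRow Wu (zt ᵥ* Mz)) (kronCol Wu (Mz *ᵥ zt))
    (Wu ⊗ₖ (Wz + Matrix.vecMulVec (Mz *ᵥ zt) (zt ᵥ* Mz)))

/-- The discrepancy forward operator `A(z) = (I_{nu}, I_{nu} ⊗ zᵀMz)`. -/
noncomputable def Aop {nu nz : ℕ} (Mz : Matrix (Fin nz) (Fin nz) ℝ) (z : Fin nz → ℝ) :
    Matrix (Fin nu) (Fin nu ⊕ Fin nu × Fin nz) ℝ :=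
  Matrix.of fun i q =>
    Sum.elim (fun i' => (1 : Matrix (Fin nu) (Fin nu) ℝ) i i')
      (fun p => (1 : Matrix (Fin nu) (Fin nu) ℝ) i p.1 * (z ᵥ* Mz) p.2) q

/-- The vertical stacking `A = (A_1; …; A_N)` of the forward operators `A_ℓ = A(z_ℓ)`. -/
noncomputable def Astack {nu nz N : ℕ} (Mz : Matrix (Fin nz) (Fin nz) ℝ)
    (z : Fin N → Fin nz → ℝ) :
    Matrix (Fin N × Fin nu) (Fin nu ⊕ Fin nu × Fin nz) ℝ :=
  Matrix.of fun p q => Aop Mz (z p.1) p.2 q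

/-- The data matrix `Z = (z_1 ⋯ z_N)` whose columns are the design points. -/
def Zmat {nz N : ℕ} (z : Fin N → Fin nz → ℝ) : Matrix (Fin nz) (Fin N) ℝ :=
  Matrix.of fun i ℓ => z ℓ i

/-- The Gram matrix `G = e eᵀ + (Z − z̃eᵀ)ᵀ Mz Wz⁻¹ Mz (Z − z̃eᵀ)`. -/
noncomputable def Gmat {nz N : ℕ} (Mz Wz : Matrix (Fin nz) (Fin nz) ℝ)
    (zt : Fin nz → ℝ) (z : Fin N → Fin nz → ℝ) : Matrix (Fin N) (Fin N) ℝ :=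
  Matrix.vecMulVec (fun _ => 1) (fun _ => 1) +
    (Zmat z - Matrix.of fun i (_ : Fin N) => zt i)ᵀ * (Mz * Wz⁻¹ * Mz) *
      (Zmat z - Matrix.of fun i (_ : Fin N) => zt i)

section AuxLemmas

lemma dot_symm' {n : ℕ} {A : Matrix (Fin n) (Fin n) ℝ} (hA : Aᵀ = A) (u v : Fin n → ℝ) :
    u ⬝ᵥ (A *ᵥ v) = (A *ᵥ u) ⬝ᵥ v := by
  rw [Matrix.dotProduct_mulVec]
  conv_lhs => rw [← hA]
  rw [Matrix.vecMul_transpose]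

lemma prod_dot' {nu nz : ℕ} (x a : Fin nu → ℝ) (w b : Fin nz → ℝ) :
    (fun p : Fin nu × Fin nz => x p.1 * w p.2) ⬝ᵥ (fun p => a p.1 * b p.2)
      = (x ⬝ᵥ a) * (w ⬝ᵥ b) := by
  simp only [dotProduct, Fintype.sum_prod_type, Finset.sum_mul_sum]
  exact Finset.sum_congr rfl fun i _ => Finset.sum_congr rfl fun k _ => by ring

lemma kron_mulVec' {nu nz : ℕ} (Wu : Matrix (Fin nu) (Fin nu) ℝ)
    (B : Matrix (Fin nz) (Fin nz) ℝ) (x : Fin nu → ℝ) (w : Fin nz → ℝ) :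
    (Wu ⊗ₖ B) *ᵥ (fun p => x p.1 * w p.2) = fun p => (Wu *ᵥ x) p.1 * (B *ᵥ w) p.2 := by
  funext p
  simp only [Matrix.mulVec, dotProduct, Matrix.kroneckerMap_apply,
    Fintype.sum_prod_type, Finset.sum_mul_sum]
  exact Finset.sum_congr rfl fun i _ => Finset.sum_congr rfl fun k _ => by ring

lemma kronRow_mulVec' {nu nz : ℕ} (Wu : Matrix (Fin nu) (Fin nu) ℝ)
    (v : Fin nz → ℝ) (x : Fin nu → ℝ) (w : Fin nz → ℝ) :
    kronRow Wu v *ᵥ (fun p => x p.1 * w p.2) = (v ⬝ᵥ w) • (Wu *ᵥ x) := by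
  funext i
  simp only [Matrix.mulVec, dotProduct, kronRow, Matrix.of_apply, Pi.smul_apply,
    smul_eq_mul, Fintype.sum_prod_type, Finset.sum_mul_sum]
  rw [Finset.sum_comm]
  exact Finset.sum_congr rfl fun a _ => Finset.sum_congr rfl fun k _ => by ring

lemma kronCol_mulVec' {nu nz : ℕ} (Wu : Matrix (Fin nu) (Fin nu) ℝ)
    (v : Fin nz → ℝ) (u : Fin nu → ℝ) :
    kronCol Wu v *ᵥ u = fun p => (Wu *ᵥ u) p.1 * v p.2 := by
  funext p
  simp only [Matrix.mulVec, dotProduct, kronCol, Matrix.of_apply, Finset.sum_mul]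
  exact Finset.sum_congr rfl fun q _ => by ring

lemma vecMulVec_mulVec' {n m : ℕ} (u : Fin n → ℝ) (v w : Fin m → ℝ) :
    Matrix.vecMulVec u v *ᵥ w = (v ⬝ᵥ w) • u := by
  funext k
  simp only [Matrix.mulVec, dotProduct, Matrix.vecMulVec_apply, Pi.smul_apply,
    smul_eq_mul, Finset.sum_mul]
  exact Finset.sum_congr rfl fun q _ => by ring

/-- The central algebraic expansion of `ψᵀ Wθ ψ'` for unnormalized vectors. -/
lemma inner_formula {nu nz : ℕ} (Wu : Matrix (Fin nu) (Fin nu) ℝ)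
    (Wz Mz : Matrix (Fin nz) (Fin nz) ℝ) (zt : Fin nz → ℝ)
    (a b : ℝ) (xa xb : Fin nu → ℝ) (wa wb : Fin nz → ℝ) :
    Sum.elim (a • xa) (fun p => xa p.1 * wa p.2) ⬝ᵥ
      (Wtheta Wu Wz Mz zt *ᵥ Sum.elim (b • xb) (fun p => xb p.1 * wb p.2))
    = (xa ⬝ᵥ (Wu *ᵥ xb)) *
        ((a + wa ⬝ᵥ (Mz *ᵥ zt)) * (b + (zt ᵥ* Mz) ⬝ᵥ wb) + wa ⬝ᵥ (Wz *ᵥ wb)) := by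
  rw [Wtheta, Matrix.fromBlocks_mulVec]
  simp only [Sum.elim_comp_inl, Sum.elim_comp_inr]
  rw [sumElim_dotProduct_sumElim]
  rw [kronRow_mulVec' Wu (zt ᵥ* Mz) xb wb, kronCol_mulVec' Wu (Mz *ᵥ zt) (b • xb),
    kron_mulVec' Wu _ xb wb]
  rw [Matrix.add_mulVec Wz _ wb, vecMulVec_mulVec' (Mz *ᵥ zt) (zt ᵥ* Mz) wb]
  rw [Matrix.mulVec_smul]
  have hsplit : (fun p : Fin nu × Fin nz => (b • (Wu *ᵥ xb)) p.1 * (Mz *ᵥ zt) p.2) +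
      (fun p : Fin nu × Fin nz =>
        (Wu *ᵥ xb) p.1 * (Wz *ᵥ wb + ((zt ᵥ* Mz) ⬝ᵥ wb) • (Mz *ᵥ zt)) p.2)
      = (b • fun p : Fin nu × Fin nz => (Wu *ᵥ xb) p.1 * (Mz *ᵥ zt) p.2) +
        ((fun p : Fin nu × Fin nz => (Wu *ᵥ xb) p.1 * (Wz *ᵥ wb) p.2) +
          (((zt ᵥ* Mz) ⬝ᵥ wb) •
            fun p : Fin nu × Fin nz => (Wu *ᵥ xb) p.1 * (Mz *ᵥ zt) p.2)) := by
    funext p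
    simp [mul_add, smul_eq_mul]
    ring
  rw [hsplit]
  simp only [dotProduct_add, dotProduct_smul, smul_dotProduct,
    prod_dot', smul_eq_mul]
  ring

end AuxLemmas

/-- The right generalized singular vectors
`ψ_{i,j} = (1/√(μ_i λ_j)) (s_i x_j ; x_j ⊗ Wz⁻¹ Mz y_i)` are `Wθ`-orthonormal. -/
theorem right_singular_vectors_orthonormal
    {nu nz N : ℕ}
    (Mu Wu : Matrix (Fin nu) (Fin nu) ℝ) (Mz Wz : Matrix (Fin nz) (Fin nz) ℝ)
    (hMu : Mu.PosDef) (hWu : Wu.PosDef) (hMz : Mz.PosDef) (hWz : Wz.PosDef)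
    (zt : Fin nz → ℝ) (z : Fin N → Fin nz → ℝ)
    (g : Fin N → Fin N → ℝ) (μ : Fin N → ℝ)
    (hgortho : ∀ i i', g i ⬝ᵥ g i' = if i = i' then 1 else 0)
    (hgeig : ∀ i, Gmat Mz Wz zt z *ᵥ g i = μ i • g i) (hμ : ∀ i, 0 < μ i)
    (x : Fin nu → Fin nu → ℝ) (lam : Fin nu → ℝ)
    (hxortho : ∀ j j', x j ⬝ᵥ (Mu *ᵥ x j') = if j = j' then 1 else 0)
    (hxeig : ∀ j, Wu *ᵥ x j = lam j • (Mu *ᵥ x j)) (hlam : ∀ j, 0 < lam j)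
    (y : Fin N → Fin nz → ℝ) (s : Fin N → ℝ)
    (hy : ∀ i, y i = Zmat z *ᵥ g i - (∑ ℓ, g i ℓ) • zt)
    (hs : ∀ i, s i = (∑ ℓ, g i ℓ) - (y i) ⬝ᵥ (Mz *ᵥ (Wz⁻¹ *ᵥ (Mz *ᵥ zt))))
    (ψ : Fin N → Fin nu → (Fin nu ⊕ Fin nu × Fin nz) → ℝ)
    (hψ : ∀ i j, ψ i j = (1 / Real.sqrt (μ i * lam j)) •
      Sum.elim (s i • x j) (fun p => x j p.1 * (Wz⁻¹ *ᵥ (Mz *ᵥ y i)) p.2)) :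
    ∀ (i i' : Fin N) (j j' : Fin nu),
      ψ i j ⬝ᵥ (Wtheta Wu Wz Mz zt *ᵥ ψ i' j')
        = if i = i' ∧ j = j' then 1 else 0 := by
  -- symmetry and invertibility facts
  have hMzT : Mzᵀ = Mz := by
    have h : Mz.IsSymm := by simpa using hMz.isHermitian
    exact h
  have hWzT : Wzᵀ = Wz := by
    have h : Wz.IsSymm := by simpa using hWz.isHermitian
    exact h
  have hWinvT : (Wz⁻¹)ᵀ = Wz⁻¹ := by rw [Matrix.transpose_nonsing_inv, hWzT]
  have hWzunit : IsUnit Wz.det := isUnit_iff_ne_zero.mpr (ne_of_gt hWz.det_pos)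
  have hWWinv : Wz * Wz⁻¹ = 1 := Matrix.mul_nonsing_inv _ hWzunit
  have hrow : zt ᵥ* Mz = Mz *ᵥ zt := by rw [← Matrix.vecMul_transpose, hMzT]
  -- key scalar identities
  have key1 : ∀ k, (Wz⁻¹ *ᵥ (Mz *ᵥ y k)) ⬝ᵥ (Mz *ᵥ zt)
      = y k ⬝ᵥ (Mz *ᵥ (Wz⁻¹ *ᵥ (Mz *ᵥ zt))) := by
    intro k
    rw [← dot_symm' hWinvT (Mz *ᵥ y k) (Mz *ᵥ zt), ← dot_symm' hMzT (y k) (Wz⁻¹ *ᵥ (Mz *ᵥ zt))]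
  have key2 : ∀ k k', (Wz⁻¹ *ᵥ (Mz *ᵥ y k)) ⬝ᵥ (Wz *ᵥ (Wz⁻¹ *ᵥ (Mz *ᵥ y k')))
      = y k ⬝ᵥ (Mz *ᵥ (Wz⁻¹ *ᵥ (Mz *ᵥ y k'))) := by
    intro k k'
    have hc : Wz *ᵥ (Wz⁻¹ *ᵥ (Mz *ᵥ y k')) = Mz *ᵥ y k' := by
      rw [Matrix.mulVec_mulVec, hWWinv, Matrix.one_mulVec]
    rw [hc, ← dot_symm' hWinvT (Mz *ᵥ y k) (Mz *ᵥ y k'),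
      ← dot_symm' hMzT (y k) (Wz⁻¹ *ᵥ (Mz *ᵥ y k'))]
  -- the action of the centered data matrix
  have hDg : ∀ k, (Zmat z - Matrix.of fun a (_ : Fin N) => zt a) *ᵥ g k = y k := by
    intro k
    rw [Matrix.sub_mulVec, hy k]
    congr 1
    funext b
    simp only [Matrix.mulVec, dotProduct, Matrix.of_apply, Pi.smul_apply, smul_eq_mul]
    rw [← Finset.mul_sum, mul_comm]
  -- the Gram-matrix identity
  have eigG : ∀ k k', (∑ ℓ, g k ℓ) * (∑ ℓ, g k' ℓ)
      + y k ⬝ᵥ (Mz *ᵥ (Wz⁻¹ *ᵥ (Mz *ᵥ y k'))) = if k = k' then μ k' else 0 := by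
    intro k k'
    have h1 : g k ⬝ᵥ (Gmat Mz Wz zt z *ᵥ g k') = if k = k' then μ k' else 0 := by
      rw [hgeig k', dotProduct_smul, hgortho, smul_eq_mul]
      split_ifs <;> ring
    rw [← h1, Gmat, Matrix.add_mulVec, dotProduct_add]
    congr 1
    · rw [vecMulVec_mulVec', dotProduct_smul, smul_eq_mul]
      simp only [dotProduct, mul_one, one_mul]
      ring
    · symm
      rw [← Matrix.mulVec_mulVec, hDg k', ← Matrix.mulVec_mulVec,
        Matrix.dotProduct_mulVec, Matrix.vecMul_transpose, hDg k,
        ← Matrix.mulVec_mulVec, ← Matrix.mulVec_mulVec]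
  -- the Wu identity
  have eigW : ∀ a b : Fin nu, x a ⬝ᵥ (Wu *ᵥ x b) = if a = b then lam b else 0 := by
    intro a b
    rw [hxeig b, dotProduct_smul, hxortho, smul_eq_mul]
    split_ifs <;> ring
  -- the combined scalar factor
  have hfac : ∀ k k',
      (s k + (Wz⁻¹ *ᵥ (Mz *ᵥ y k)) ⬝ᵥ (Mz *ᵥ zt)) *
        (s k' + (zt ᵥ* Mz) ⬝ᵥ (Wz⁻¹ *ᵥ (Mz *ᵥ y k'))) +
        (Wz⁻¹ *ᵥ (Mz *ᵥ y k)) ⬝ᵥ (Wz *ᵥ (Wz⁻¹ *ᵥ (Mz *ᵥ y k')))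
      = if k = k' then μ k' else 0 := by
    intro k k'
    have e1 : ∀ m, s m + (Wz⁻¹ *ᵥ (Mz *ᵥ y m)) ⬝ᵥ (Mz *ᵥ zt) = ∑ ℓ, g m ℓ := by
      intro m
      rw [key1, hs m]
      ring
    have e2 : (zt ᵥ* Mz) ⬝ᵥ (Wz⁻¹ *ᵥ (Mz *ᵥ y k')) =
        (Wz⁻¹ *ᵥ (Mz *ᵥ y k')) ⬝ᵥ (Mz *ᵥ zt) := by
      rw [hrow, dotProduct_comm]
    rw [e2]
    calc (s k + (Wz⁻¹ *ᵥ (Mz *ᵥ y k)) ⬝ᵥ (Mz *ᵥ zt)) *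
        (s k' + (Wz⁻¹ *ᵥ (Mz *ᵥ y k')) ⬝ᵥ (Mz *ᵥ zt)) +
        (Wz⁻¹ *ᵥ (Mz *ᵥ y k)) ⬝ᵥ (Wz *ᵥ (Wz⁻¹ *ᵥ (Mz *ᵥ y k')))
        = (∑ ℓ, g k ℓ) * (∑ ℓ, g k' ℓ) + y k ⬝ᵥ (Mz *ᵥ (Wz⁻¹ *ᵥ (Mz *ᵥ y k'))) := by
          rw [e1 k, e1 k', key2]
      _ = if k = k' then μ k' else 0 := eigG k k'
  -- main computation
  intro i i' j j'
  rw [hψ i j, hψ i' j', Matrix.mulVec_smul, smul_dotProduct, dotProduct_smul,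
    inner_formula, eigW, hfac, smul_eq_mul, smul_eq_mul]
  by_cases hii : i = i'
  · by_cases hjj : j = j'
    · subst hii; subst hjj
      simp only [if_pos rfl, and_self]
      have ht : (0:ℝ) < μ i * lam j := mul_pos (hμ i) (hlam j)
      have hsq : Real.sqrt (μ i * lam j) * Real.sqrt (μ i * lam j) = μ i * lam j :=
        Real.mul_self_sqrt ht.le
      field_simp
      simp only [↓reduceIte]; nlinarith [hsq, ht]
    · simp [hjj]
  · simp [hii]
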